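/- Let 1 ≤ k ≤ r-1. Then every {r, r+1}-graph has a {k, k+1}-factor. -/

import Mathlib

/-- The degree of `v` in the graph `F`. -/
noncomputable def ndeg {V : Type*} (F : SimpleGraph V) (v : V) : ℕ :=
  (F.neighborSet v).ncard

open Finset

lemma ndeg_eq_degree {V : Type*} [Fintype V] (F : SimpleGraph V) [DecidableRel F.Adj] (v : V) :
    ndeg F v = F.degree v := by
  rw [ndeg, SimpleGraph.degree, SimpleGraph.neighborFinset, Set.ncard_eq_toFinset_card']

/-- Decrement step: every `{r+1, r+2}`-graph has an `{r, r+1}`-factor. -/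
lemma step_lemma {r : ℕ} {V : Type*} [Fintype V] (G : SimpleGraph V)
    (hdeg : ∀ v, ndeg G v = r + 1 ∨ ndeg G v = r + 2) :
    ∃ H ≤ G, ∀ v, ndeg H v = r ∨ ndeg H v = r + 1 := by
  classical
  set S : Finset V := univ.filter (fun v => ndeg G v = r + 2) with hS
  -- Hall's condition
  have hall : ∀ s : Finset ↥S, #s ≤ #(s.biUnion (fun x => G.neighborFinset ↑x)) := by
    intro s
    set N := s.biUnion (fun x => G.neighborFinset (↑x : V)) with hN
    have key : #s * (r + 2) ≤ #N * (r + 2) := by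
      apply Finset.card_mul_le_card_mul (fun (a : ↥S) (b : V) => G.Adj ↑a b)
      · intro a ha
        have hsub : G.neighborFinset ↑a ⊆ N.bipartiteAbove (fun (a : ↥S) (b : V) => G.Adj ↑a b) a := by
          intro u hu
          simp only [Finset.bipartiteAbove, mem_filter, hN]
          refine ⟨Finset.mem_biUnion.2 ⟨a, ha, hu⟩, (SimpleGraph.mem_neighborFinset ..).1 hu⟩
        have hdega : #(G.neighborFinset ↑a) = r + 2 := by
          have h2 : ndeg G ↑a = r + 2 := (mem_filter.1 a.2).2
          rwa [ndeg_eq_degree] at h2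
        calc r + 2 = #(G.neighborFinset ↑a) := hdega.symm
          _ ≤ _ := Finset.card_le_card hsub
      · intro b _
        have hle : #(s.bipartiteBelow (fun (a : ↥S) (b : V) => G.Adj ↑a b) b)
            ≤ #(G.neighborFinset b) := by
          apply Finset.card_le_card_of_injOn Subtype.val
          · intro a ha
            rw [Finset.mem_coe, Finset.mem_bipartiteBelow] at ha
            exact (SimpleGraph.mem_neighborFinset ..).2 ha.2.symm
          · intro a _ a' _ h
            exact Subtype.ext h
        have hdb : #(G.neighborFinset b) ≤ r + 2 := by
          have h2 : ndeg G b = #(G.neighborFinset b) := ndeg_eq_degree G b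
          rcases hdeg b with h | h <;> omega
        omega
    exact Nat.le_of_mul_le_mul_right key (by omega)
  obtain ⟨f, hfinj, hf⟩ := (Finset.all_card_le_biUnion_card_iff_exists_injective
    (fun x : ↥S => G.neighborFinset ↑x)).1 hall
  -- the set of edges to delete
  set E : Set (Sym2 V) := {e | ∃ x : ↥S, e = s(↑x, f x)} with hE
  refine ⟨G.deleteEdges E, SimpleGraph.deleteEdges_le E, ?_⟩
  have hmem : ∀ (x : ↥S) (u : V), u = ↑x → ∃ h : u ∈ S, f ⟨u, h⟩ = f x := by
    rintro x u rfl
    exact ⟨x.2, by rw [Subtype.coe_eta]⟩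
  intro v
  set D : Finset V := (G.neighborFinset v).filter (fun u => s(v, u) ∈ E) with hD
  have hnb : (G.deleteEdges E).neighborFinset v
      = (G.neighborFinset v).filter (fun u => s(v, u) ∉ E) := by
    ext u
    simp [SimpleGraph.deleteEdges_adj, and_comm]
  have hcard : ndeg (G.deleteEdges E) v = ndeg G v - #D := by
    rw [ndeg_eq_degree, ndeg_eq_degree, SimpleGraph.degree, SimpleGraph.degree, hnb, hD,
      Finset.filter_not, Finset.card_sdiff_of_subset (Finset.filter_subset _ _)]
  have hone : #(univ.filter (fun u => ∃ h : u ∈ S, f ⟨u, h⟩ = v)) ≤ 1 := by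
    apply Finset.card_le_one.2
    intro a ha b hb
    simp only [mem_filter] at ha hb
    obtain ⟨_, ha1, ha2⟩ := ha
    obtain ⟨_, hb1, hb2⟩ := hb
    have := hfinj (ha2.trans hb2.symm)
    exact congrArg Subtype.val this
  by_cases hv : v ∈ S
  · -- degree r+2, we delete 1 or 2 edges at v
    have hdv : ndeg G v = r + 2 := (mem_filter.1 hv).2
    have hDsub : D ⊆ insert (f ⟨v, hv⟩) (univ.filter (fun u => ∃ h : u ∈ S, f ⟨u, h⟩ = v)) := by
      intro u hu
      rw [hD, mem_filter] at hu
      obtain ⟨-, x, hx⟩ := hu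
      rw [Sym2.eq_iff] at hx
      rcases hx with ⟨h1, h2⟩ | ⟨h1, h2⟩
      · have : x = ⟨v, hv⟩ := Subtype.ext h1.symm
        rw [this] at h2
        exact Finset.mem_insert.2 (Or.inl h2)
      · obtain ⟨h, hh⟩ := hmem x u h2
        exact Finset.mem_insert.2 (Or.inr (mem_filter.2 ⟨mem_univ _, h, hh.trans h1.symm⟩))
    have hDle : #D ≤ 2 := by
      calc #D ≤ _ := Finset.card_le_card hDsub
        _ ≤ _ + 1 := Finset.card_insert_le _ _
        _ ≤ 2 := by omega
    have hDge : 1 ≤ #D := by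
      refine Finset.card_pos.2 ⟨f ⟨v, hv⟩, ?_⟩
      rw [hD, mem_filter]
      exact ⟨hf ⟨v, hv⟩, ⟨⟨v, hv⟩, rfl⟩⟩
    omega
  · -- degree r+1, we delete 0 or 1 edges at v
    have hdv : ndeg G v = r + 1 := by
      rcases hdeg v with h | h
      · exact h
      · exact absurd (mem_filter.2 ⟨mem_univ v, h⟩ : v ∈ S) hv
    have hDsub : D ⊆ univ.filter (fun u => ∃ h : u ∈ S, f ⟨u, h⟩ = v) := by
      intro u hu
      rw [hD, mem_filter] at hu
      obtain ⟨-, x, hx⟩ := hu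
      rw [Sym2.eq_iff] at hx
      rcases hx with ⟨h1, h2⟩ | ⟨h1, h2⟩
      · exact absurd (h1 ▸ x.2) hv
      · obtain ⟨h, hh⟩ := hmem x u h2
        exact mem_filter.2 ⟨mem_univ _, h, hh.trans h1.symm⟩
    have hDle : #D ≤ 1 := le_trans (Finset.card_le_card hDsub) hone
    omega

lemma main_aux {k : ℕ} {V : Type*} [Fintype V] :
    ∀ m, k ≤ m → ∀ G : SimpleGraph V, (∀ v, ndeg G v = m ∨ ndeg G v = m + 1) →
      ∃ F ≤ G, ∀ v, ndeg F v = k ∨ ndeg F v = k + 1 := by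
  intro m
  induction m with
  | zero => intro hk G h; exact ⟨G, le_refl _, by simpa [Nat.le_zero.1 hk] using h⟩
  | succ n ih =>
    intro hk G h
    rcases Nat.lt_or_ge k (n + 1) with hlt | hge
    · obtain ⟨H, hHG, hH⟩ := step_lemma G h
      obtain ⟨F, hFH, hF⟩ := ih (Nat.lt_succ_iff.1 hlt) H hH
      exact ⟨F, le_trans hFH hHG, hF⟩
    · have : k = n + 1 := le_antisymm hk hge
      exact ⟨G, le_refl _, by simpa [this] using h⟩

/-- **Thomassen's theorem.** If `1 ≤ k ≤ r - 1`, then every `{r, r+1}`-graph has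
a `{k, k+1}`-factor. -/
theorem thomassen_k_k1_factor {r k : ℕ} (hk1 : 1 ≤ k) (hkr : k ≤ r - 1)
    {V : Type*} [Fintype V]
    (G : SimpleGraph V) (hdeg : ∀ v, ndeg G v = r ∨ ndeg G v = r + 1) :
    ∃ F ≤ G, ∀ v, ndeg F v = k ∨ ndeg F v = k + 1 := by
  exact main_aux r (by omega) G hdeg
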